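/- Let F: 𝒢 → 𝒢' be a functor between essentially finite groupoids and y an object of 𝒢'. Let 𝒢_y denote the full subgroupoid of 𝒢 on those objects x with F(x) isomorphic to y. Then the forgetful functor F⁻¹[y] → 𝒢_y, (x, h) ↦ x, from the homotopy fibre of y to 𝒢_y is an |Aut(y)|-fold covering of groupoids. -/

import Mathlib

open CategoryTheory

/-- A groupoid is essentially finite if it has finitely many isomorphism classes of objects
and all automorphism groups of its objects are finite. -/
def EssentiallyFinite (G : Type) [Groupoid.{0, 0} G] : Prop :=
  Finite (Quotient (isIsomorphicSetoid G)) ∧ ∀ x : G, Finite (x ⟶ x)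

/-- The groupoid cardinality `|𝒢| = ∑_{[x] ∈ π₀(𝒢)} 1 / |Aut x|` of a groupoid. -/
noncomputable def groupoidCard (G : Type) [Groupoid.{0, 0} G] : ℚ :=
  ∑ᶠ q : Quotient (isIsomorphicSetoid G),
    1 / (Nat.card (Quotient.out q ⟶ Quotient.out q) : ℚ)

/-- A functor between groupoids is a covering if for every object `x` of the source and
every morphism `f` of the target with source `F.obj x` there is exactly one morphism `u`
of the source with source `x` such that `F` maps `u` to `f`. -/
def IsCovering {G G' : Type} [Groupoid.{0, 0} G] [Groupoid.{0, 0} G'] (F : G ⥤ G') : Prop :=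
  ∀ x : G, Function.Bijective
    (fun p : Σ y : G, x ⟶ y => (⟨F.obj p.1, F.map p.2⟩ : Σ y' : G', F.obj x ⟶ y'))

/-- An `n`-fold covering is a covering such that every fibre has exactly `n` elements. -/
def IsNFoldCovering {G G' : Type} [Groupoid.{0, 0} G] [Groupoid.{0, 0} G'] (n : ℕ)
    (F : G ⥤ G') : Prop :=
  IsCovering F ∧
    ∀ y : G', Finite {x : G // F.obj x = y} ∧ Nat.card {x : G // F.obj x = y} = n

/-- The homotopy fibre of a functor of groupoids over an object `y` (the costructured arrow
category with objects pairs `(x, h : F.obj x ⟶ y)`) is a groupoid. -/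
instance costructuredArrowGroupoid {G G' : Type} [Groupoid.{0, 0} G] [Groupoid.{0, 0} G']
    (F : G ⥤ G') (y : G') : Groupoid.{0, 0} (CostructuredArrow F y) where
  inv {A B} f :=
    CostructuredArrow.homMk (Groupoid.inv f.left)
      (by rw [← CostructuredArrow.w f, ← Category.assoc, ← F.map_comp, Groupoid.inv_comp,
            F.map_id, Category.id_comp])
  inv_comp {A B} f := by
    apply CostructuredArrow.hom_ext
    simp [Groupoid.inv_comp]
  comp_inv {A B} f := by
    apply CostructuredArrow.hom_ext
    simp [Groupoid.comp_inv]

/-- The full subgroupoid of a groupoid on a property of objects. -/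
instance fullSubcategoryGroupoid {G : Type} [Groupoid.{0, 0} G] (P : G → Prop) :
    Groupoid.{0, 0} (ObjectProperty.FullSubcategory P) where
  inv f := ObjectProperty.homMk (Groupoid.inv f.hom)
  inv_comp f := ObjectProperty.hom_ext _ (Groupoid.inv_comp f.hom)
  comp_inv f := ObjectProperty.hom_ext _ (Groupoid.comp_inv f.hom)

/-- The forgetful functor `F⁻¹[y] ⥤ 𝒢_y`, `(x, h) ↦ x`, from the homotopy fibre of `y` to the
full subgroupoid of `𝒢` on those objects whose image is isomorphic to `y`. -/
noncomputable def homotopyFiberForget {G G' : Type} [Groupoid.{0, 0} G] [Groupoid.{0, 0} G']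
    (F : G ⥤ G') (y : G') :
    CostructuredArrow F y ⥤ ObjectProperty.FullSubcategory (fun x : G => Nonempty (F.obj x ≅ y)) where
  obj p := ⟨p.left, ⟨asIso p.hom⟩⟩
  map u := ObjectProperty.homMk u.left
  map_id _ := rfl
  map_comp _ _ := rfl

/-- The forgetful functor from the homotopy fibre of `y` to the full subgroupoid `𝒢_y` is an
`|Aut y|`-fold covering of groupoids. -/
theorem homotopyFiberForget_isNFoldCovering {G G' : Type}
    [Groupoid.{0, 0} G] [Groupoid.{0, 0} G'] (hG : EssentiallyFinite G)
    (hG' : EssentiallyFinite G') (F : G ⥤ G') (y : G') :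
    IsNFoldCovering (Nat.card (y ⟶ y)) (homotopyFiberForget F y) := by
  constructor
  · -- covering
    intro p
    refine (Equiv.mk _ (fun b => ⟨CostructuredArrow.mk (Groupoid.inv (F.map b.2.hom) ≫ p.hom),
      CostructuredArrow.homMk b.2.hom ((Category.assoc _ _ _).symm.trans ((congrArg (· ≫ p.hom) (Groupoid.comp_inv _)).trans (Category.id_comp _)))⟩) ?_ ?_).bijective
    · rintro ⟨⟨l, ⟨⟨⟩⟩, h⟩, ⟨ul, ur, w⟩⟩
      dsimp only at ul ur w
      have hh : Groupoid.inv (F.map ul) ≫ p.hom = h := by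
        have w' : F.map ul ≫ h = p.hom := by
          rw [w]; exact Category.comp_id _
        rw [← w']; simp
      subst hh
      obtain ⟨⟨⟩⟩ := ur
      rfl
    · rintro ⟨x₁, u⟩
      rfl
  · intro x₁
    have : ∀ {p : CostructuredArrow F y},
        (homotopyFiberForget F y).obj p = x₁ → p.left = x₁.obj := by
      intro p hp; exact congrArg ObjectProperty.FullSubcategory.obj hp
    let e : {p : CostructuredArrow F y // (homotopyFiberForget F y).obj p = x₁} ≃
        (F.obj x₁.obj ⟶ y) :=
      { toFun := fun p => eqToHom (congrArg F.obj (this p.2).symm) ≫ p.1.hom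
        invFun := fun h => ⟨CostructuredArrow.mk h, rfl⟩
        left_inv := by
          rintro ⟨⟨l, ⟨⟨⟩⟩, h⟩, hp⟩
          have hl : l = x₁.obj := this hp
          subst hl
          apply Subtype.ext
          simp [CostructuredArrow.mk]
        right_inv := fun h => by simp }
    obtain ⟨i⟩ := x₁.property
    have e2 : (F.obj x₁.obj ⟶ y) ≃ (y ⟶ y) := i.homCongr (Iso.refl y)
    have := hG'.2 y
    constructor
    · exact Finite.of_equiv _ (e.trans e2).symm
    · exact Nat.card_congr (e.trans e2)
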